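/- For every even integer ℓ ≥ 4 with ℓ not divisible by 6, the Cartesian product C_3 □ C_ℓ of a 3-cycle and an ℓ-cycle is a nut graph (of order 3ℓ). -/

import Mathlib

namespace NutPaper

open Matrix

variable {V : Type*}

open scoped Classical in
/-- The real adjacency matrix of a simple graph. -/
noncomputable def adjMat (G : SimpleGraph V) : Matrix V V ℝ :=
  Matrix.of fun u v => if G.Adj u v then (1 : ℝ) else 0

/-- A nut graph: the adjacency matrix has nullity exactly one, and every
nonzero kernel vector has all entries nonzero. -/
def IsNutGraph [Fintype V] (G : SimpleGraph V) : Prop :=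
  Module.finrank ℝ (LinearMap.ker (Matrix.mulVecLin (adjMat G))) = 1 ∧
  ∀ x : V → ℝ, adjMat G *ᵥ x = 0 → x ≠ 0 → ∀ v, x v ≠ 0

/-- The orbit of a vertex under the full automorphism group. -/
def vertexOrbit (G : SimpleGraph V) (v : V) : Set V :=
  {u | ∃ α : G ≃g G, α v = u}

/-- The set of vertex orbits. -/
def vertexOrbits (G : SimpleGraph V) : Set (Set V) :=
  Set.range (vertexOrbit G)

/-- The number of vertex orbits. -/
noncomputable def numVertexOrbits (G : SimpleGraph V) : ℕ :=
  Nat.card (vertexOrbits G)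

/-- The orbit of an edge under the full automorphism group. -/
def edgeOrbit (G : SimpleGraph V) (e : Sym2 V) : Set (Sym2 V) :=
  {f | ∃ α : G ≃g G, Sym2.map (⇑α) e = f}

/-- The set of edge orbits. -/
def edgeOrbits (G : SimpleGraph V) : Set (Set (Sym2 V)) :=
  edgeOrbit G '' G.edgeSet

/-- The number of edge orbits. -/
noncomputable def numEdgeOrbits (G : SimpleGraph V) : ℕ :=
  Nat.card (edgeOrbits G)

/-! ### Auxiliary lemmas -/

/-- A sequence satisfying `f (n+2) = f (n+1) - f n` with even period `ℓ` not divisible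
by 3 is identically zero. -/
lemma seqZero (ℓ : ℕ) (hle : Even ℓ) (h3 : ¬ 3 ∣ ℓ) (hl2 : 2 ≤ ℓ)
    (f : ℕ → ℝ) (hf : ∀ n, f (n + 2) = f (n + 1) - f n)
    (hper : ∀ n, f (n + ℓ) = f n) : ∀ n, f n = 0 := by
  set Z : ℕ → ℝ := fun n => (-1 : ℝ) ^ n * f n with hZdef
  have hZ : ∀ n, Z (n + 2) = -Z (n + 1) - Z n := by
    intro n
    simp only [hZdef, hf n, pow_succ]
    ring
  have hZ3 : ∀ n, Z (n + 3) = Z n := by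
    intro n
    have h1 := hZ (n + 1)
    have h2 := hZ n
    have e1 : n + 1 + 2 = n + 3 := by ring
    rw [e1] at h1
    have e2 : n + 1 + 1 = n + 2 := by ring
    rw [e2] at h1
    linarith
  have hZper : ∀ n, Z (n + ℓ) = Z n := by
    intro n
    simp only [hZdef, hper n, pow_add, hle.neg_one_pow, mul_one]
  have hZ3m : ∀ m n, Z (n + 3 * m) = Z n := by
    intro m
    induction m with
    | zero => simp
    | succ k ih =>
      intro n
      have e : n + 3 * (k + 1) = (n + 3 * k) + 3 := by ring
      rw [e, hZ3, ih]
  have hZpm : ∀ m n, Z (n + ℓ * m) = Z n := by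
    intro m
    induction m with
    | zero => simp
    | succ k ih =>
      intro n
      have e : n + ℓ * (k + 1) = (n + ℓ * k) + ℓ := by ring
      rw [e, hZper, ih]
  have hcop : Nat.Coprime 3 ℓ := (Nat.Prime.coprime_iff_not_dvd (by norm_num)).2 h3
  obtain ⟨a, -, ha⟩ := Nat.exists_mul_mod_eq_one_of_coprime hcop (by omega)
  have hkey : 3 * a = ℓ * (3 * a / ℓ) + 1 := by
    conv_lhs => rw [← Nat.div_add_mod (3 * a) ℓ]
    rw [ha]
  have hshift : ∀ n, Z (n + 1) = Z n := by
    intro n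
    have h1 : Z (n + 3 * a) = Z n := hZ3m a n
    have h2 : n + 3 * a = (n + 1) + ℓ * (3 * a / ℓ) := by omega
    rw [h2, hZpm] at h1
    exact h1
  have hconst : ∀ n, Z n = Z 0 := by
    intro n
    induction n with
    | zero => rfl
    | succ k ih => rw [hshift k, ih]
  have hz0 : Z 0 = 0 := by
    have := hZ 0
    rw [hconst 2, hconst 1] at this
    linarith
  intro n
  have hn := hconst n
  rw [hz0, hZdef] at hn
  simp only at hn
  have hne : ((-1 : ℝ) ^ n) ≠ 0 := pow_ne_zero _ (by norm_num)
  exact (mul_eq_zero.1 hn).resolve_left hne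

/-- A sequence satisfying `u (n+2) = 2 u (n+1) - u n` with period `ℓ ≥ 1` is constant. -/
lemma seqConst (ℓ : ℕ) (hl : 1 ≤ ℓ) (u : ℕ → ℝ)
    (hu : ∀ n, u (n + 2) = 2 * u (n + 1) - u n)
    (hper : ∀ n, u (n + ℓ) = u n) : ∀ n, u n = u 0 := by
  have harith : ∀ n, u n = u 0 + n * (u 1 - u 0) := by
    intro n
    induction n using Nat.twoStepInduction with
    | zero => simp
    | one => simp
    | more k ih1 ih2 =>
      rw [hu k, ih1, ih2]
      push_cast
      ring
  have hd : (ℓ : ℝ) * (u 1 - u 0) = 0 := by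
    have h1 := harith ℓ
    have h2 := hper 0
    simp only [zero_add] at h2
    rw [h2] at h1
    linarith
  have hd0 : u 1 - u 0 = 0 := by
    have hne : (ℓ : ℝ) ≠ 0 := by positivity
    exact (mul_eq_zero.1 hd).resolve_left hne
  intro n
  rw [harith n, hd0]
  ring

lemma fin3_facts : ∀ i : Fin 3, i + 1 ≠ i + 2 ∧ i + 1 ≠ i ∧ i + 2 ≠ i ∧ i ≠ i + 1 ∧ i ≠ i + 2 := by
  decide

lemma cyc3_adj : ∀ a b : Fin 3, (SimpleGraph.cycleGraph 3).Adj a b ↔ (b = a + 1 ∨ b = a + 2) := by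
  decide

open Fin.CommRing in
lemma cycl_adj (m : ℕ) (a b : Fin (m + 2)) :
    (SimpleGraph.cycleGraph (m + 2)).Adj a b ↔ (b = a + 1 ∨ b = a - 1) := by
  rw [SimpleGraph.cycleGraph_adj]
  constructor
  · rintro (h | h)
    · right; linear_combination -h
    · left; linear_combination h
  · rintro (h | h)
    · right; linear_combination h
    · left; linear_combination -h

open Fin.CommRing in
lemma succ_ne_pred (m : ℕ) (hm : 2 ≤ m) (k : Fin (m + 2)) : k + 1 ≠ k - 1 := by
  intro h
  have h1 : (1 : Fin (m + 2)) = -1 := by linear_combination h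
  have h2 := congrArg Fin.val h1
  rw [Fin.val_one, Fin.coe_neg_one] at h2
  omega

lemma adjIff (m : ℕ) (v u : Fin 3 × Fin (m + 2)) :
    ((SimpleGraph.cycleGraph 3) □ (SimpleGraph.cycleGraph (m + 2))).Adj v u ↔
      (u = (v.1 + 1, v.2) ∨ u = (v.1 + 2, v.2) ∨ u = (v.1, v.2 + 1) ∨ u = (v.1, v.2 - 1)) := by
  obtain ⟨i, k⟩ := v
  obtain ⟨a, b⟩ := u
  rw [SimpleGraph.boxProd_adj]
  rw [show ((SimpleGraph.cycleGraph 3).Adj i a ∧ k = b ∨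
      (SimpleGraph.cycleGraph (m + 2)).Adj k b ∧ i = a) ↔
      (((a = i + 1 ∨ a = i + 2) ∧ k = b) ∨ ((b = k + 1 ∨ b = k - 1) ∧ i = a)) from by
    rw [cyc3_adj i a, cycl_adj m k b]]
  simp only [Prod.mk.injEq]
  constructor
  · rintro (⟨h | h, rfl⟩ | ⟨h | h, rfl⟩) <;> simp [h]
  · rintro (⟨rfl, rfl⟩ | ⟨rfl, rfl⟩ | ⟨rfl, rfl⟩ | ⟨rfl, rfl⟩) <;> simp

/-- The key local formula for the adjacency matrix of `C₃ □ C_{m+2}` acting on a vector. -/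
lemma mv (m : ℕ) (hm : 2 ≤ m) (x : Fin 3 × Fin (m + 2) → ℝ) (v : Fin 3 × Fin (m + 2)) :
    (adjMat ((SimpleGraph.cycleGraph 3) □ (SimpleGraph.cycleGraph (m + 2))) *ᵥ x) v =
      x (v.1 + 1, v.2) + x (v.1 + 2, v.2) + x (v.1, v.2 + 1) + x (v.1, v.2 - 1) := by
  classical
  obtain ⟨i, k⟩ := v
  set s : Finset (Fin 3 × Fin (m + 2)) :=
    {(i + 1, k), (i + 2, k), (i, k + 1), (i, k - 1)} with hs
  have h1 : (adjMat ((SimpleGraph.cycleGraph 3) □ (SimpleGraph.cycleGraph (m + 2))) *ᵥ x) (i, k)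
      = ∑ u : Fin 3 × Fin (m + 2), if u ∈ s then x u else 0 := by
    simp only [adjMat, Matrix.mulVec, dotProduct, Matrix.of_apply, ite_mul, one_mul,
      zero_mul]
    refine Finset.sum_congr rfl fun u _ => ?_
    refine if_congr ?_ rfl rfl
    rw [adjIff m (i, k) u]
    simp [hs]
  rw [h1, Finset.sum_ite_mem, Finset.univ_inter]
  obtain ⟨hf1, hf2, hf3, hf4, hf5⟩ := fin3_facts i
  have hkk : k + 1 ≠ k - 1 := succ_ne_pred m hm k
  rw [hs]
  rw [Finset.sum_insert (by simp [Prod.ext_iff, hf1, hf2]),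
    Finset.sum_insert (by simp [Prod.ext_iff, hf3]),
    Finset.sum_insert (by simp [Prod.ext_iff, hkk]),
    Finset.sum_singleton]
  dsimp only
  ring

open Fin.CommRing in
/-- Characterization of kernel vectors of `C₃ □ C_{m+2}`. -/
lemma charKer (m : ℕ) (hm : 2 ≤ m) (he : Even (m + 2)) (h3 : ¬ 3 ∣ (m + 2))
    (x : Fin 3 × Fin (m + 2) → ℝ)
    (hx : ∀ (i : Fin 3) (k : Fin (m + 2)),
      x (i + 1, k) + x (i + 2, k) + x (i, k + 1) + x (i, k - 1) = 0) :
    ∀ i k, x (i, k) = (-1 : ℝ) ^ (k.val) * x (0, 0) := by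
  have f01 : (0 : Fin 3) + 1 = 1 := by decide
  have f02 : (0 : Fin 3) + 2 = 2 := by decide
  have f11 : (1 : Fin 3) + 1 = 2 := by decide
  have f12 : (1 : Fin 3) + 2 = 0 := by decide
  have f21 : (2 : Fin 3) + 1 = 0 := by decide
  have f22 : (2 : Fin 3) + 2 = 1 := by decide
  have e0 : ∀ k : Fin (m + 2), x (1, k) + x (2, k) + x (0, k + 1) + x (0, k - 1) = 0 := by
    intro k; have := hx 0 k; rwa [f01, f02] at this
  have e1 : ∀ k : Fin (m + 2), x (2, k) + x (0, k) + x (1, k + 1) + x (1, k - 1) = 0 := by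
    intro k; have := hx 1 k; rwa [f11, f12] at this
  have e2 : ∀ k : Fin (m + 2), x (0, k) + x (1, k) + x (2, k + 1) + x (2, k - 1) = 0 := by
    intro k; have := hx 2 k; rwa [f21, f22] at this
  have hc1 : ∀ n : ℕ, ((n + 1 : ℕ) : Fin (m + 2)) + 1 = ((n + 2 : ℕ) : Fin (m + 2)) := by
    intro n; push_cast; ring
  have hc2 : ∀ n : ℕ, ((n + 1 : ℕ) : Fin (m + 2)) - 1 = ((n : ℕ) : Fin (m + 2)) := by
    intro n; push_cast; ring
  set P : ℕ → ℝ := fun n => x (0, (n : Fin (m + 2))) - x (1, (n : Fin (m + 2))) with hPdef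
  set Q : ℕ → ℝ := fun n => x (1, (n : Fin (m + 2))) - x (2, (n : Fin (m + 2))) with hQdef
  have hP : ∀ n, P (n + 2) = P (n + 1) - P n := by
    intro n
    have ha := e0 ((n + 1 : ℕ) : Fin (m + 2))
    have hb := e1 ((n + 1 : ℕ) : Fin (m + 2))
    rw [hc1, hc2] at ha hb
    simp only [hPdef]
    linarith
  have hQ : ∀ n, Q (n + 2) = Q (n + 1) - Q n := by
    intro n
    have ha := e1 ((n + 1 : ℕ) : Fin (m + 2))
    have hb := e2 ((n + 1 : ℕ) : Fin (m + 2))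
    rw [hc1, hc2] at ha hb
    simp only [hQdef]
    linarith
  have hPper : ∀ n, P (n + (m + 2)) = P n := by
    intro n; simp only [hPdef]; rw [Nat.cast_add, Fin.natCast_self, add_zero]
  have hQper : ∀ n, Q (n + (m + 2)) = Q n := by
    intro n; simp only [hQdef]; rw [Nat.cast_add, Fin.natCast_self, add_zero]
  have hP0 := seqZero (m + 2) he h3 (by omega) P hP hPper
  have hQ0 := seqZero (m + 2) he h3 (by omega) Q hQ hQper
  have hx1 : ∀ k : Fin (m + 2), x (1, k) = x (0, k) := by
    intro k
    have := hP0 k.val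
    simp only [hPdef, Fin.cast_val_eq_self] at this
    linarith
  have hx2 : ∀ k : Fin (m + 2), x (2, k) = x (0, k) := by
    intro k
    have := hQ0 k.val
    simp only [hQdef, Fin.cast_val_eq_self] at this
    have h1 := hx1 k
    linarith
  set R : ℕ → ℝ := fun n => x (0, (n : Fin (m + 2))) with hRdef
  set U : ℕ → ℝ := fun n => (-1 : ℝ) ^ n * R n with hUdef
  have hU : ∀ n, U (n + 2) = 2 * U (n + 1) - U n := by
    intro n
    have ha := e0 ((n + 1 : ℕ) : Fin (m + 2))
    rw [hc1, hc2, hx1, hx2] at ha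
    have hA : x (0, ((n + 2 : ℕ) : Fin (m + 2))) =
        -2 * x (0, ((n + 1 : ℕ) : Fin (m + 2))) - x (0, ((n : ℕ) : Fin (m + 2))) := by
      linarith
    simp only [hUdef, hRdef]
    rw [hA, pow_succ, pow_succ]
    ring
  have hUper : ∀ n, U (n + (m + 2)) = U n := by
    intro n
    simp only [hUdef, hRdef]
    rw [Nat.cast_add, Fin.natCast_self, add_zero, pow_add, he.neg_one_pow, mul_one]
  have hUc := seqConst (m + 2) (by omega) U hU hUper
  have hU0 : U 0 = x (0, 0) := by
    simp [hUdef, hRdef]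
  have hx0k : ∀ k : Fin (m + 2), x (0, k) = (-1 : ℝ) ^ (k.val) * x (0, 0) := by
    intro k
    have hk := hUc k.val
    rw [hU0] at hk
    simp only [hUdef, hRdef, Fin.cast_val_eq_self] at hk
    have hsq : (-1 : ℝ) ^ (k.val) * (-1 : ℝ) ^ (k.val) = 1 := by
      rw [← pow_add]
      exact Even.neg_one_pow ⟨k.val, rfl⟩
    calc x (0, k) = ((-1 : ℝ) ^ (k.val) * (-1 : ℝ) ^ (k.val)) * x (0, k) := by
          rw [hsq, one_mul]
      _ = (-1 : ℝ) ^ (k.val) * x (0, 0) := by rw [mul_assoc, hk]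
  intro i k
  fin_cases i
  · exact hx0k k
  · exact (hx1 k).trans (hx0k k)
  · exact (hx2 k).trans (hx0k k)

/-- For every even `ℓ ≥ 4` not divisible by `6`, the Cartesian
(box) product `C₃ □ C_ℓ` is a nut graph. -/
theorem cycle3_boxProd_cycle_isNutGraph (ℓ : ℕ)
    (hl : Even ℓ) (hl4 : 4 ≤ ℓ) (hl6 : ¬ (6 ∣ ℓ)) :
    IsNutGraph ((SimpleGraph.cycleGraph 3) □ (SimpleGraph.cycleGraph ℓ)) := by
  obtain ⟨m, rfl⟩ : ∃ m, ℓ = m + 2 := ⟨ℓ - 2, by omega⟩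
  have hm : 2 ≤ m := by omega
  have h3 : ¬ 3 ∣ (m + 2) := by
    intro h3
    exact hl6 (Nat.Coprime.mul_dvd_of_dvd_of_dvd (by norm_num) hl.two_dvd h3)
  set w : Fin 3 × Fin (m + 2) → ℝ := fun p => (-1 : ℝ) ^ (p.2.val) with hwdef
  have parity : ∀ k : Fin (m + 2), (-1 : ℝ) ^ ((k + 1).val) = -(-1 : ℝ) ^ (k.val) := by
    intro k
    have hval : (k + 1).val = (k.val + 1) % (m + 2) := by rw [Fin.add_def, Fin.val_one]
    rw [hval, neg_one_pow_eq_pow_mod_two, Nat.mod_mod_of_dvd _ hl.two_dvd,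
      ← neg_one_pow_eq_pow_mod_two, pow_succ]
    ring
  have paritym : ∀ k : Fin (m + 2), (-1 : ℝ) ^ ((k - 1).val) = -(-1 : ℝ) ^ (k.val) := by
    intro k
    have := parity (k - 1)
    rw [sub_add_cancel] at this
    linarith
  have hwker : adjMat ((SimpleGraph.cycleGraph 3) □ (SimpleGraph.cycleGraph (m + 2))) *ᵥ w
      = 0 := by
    funext v
    rw [mv m hm]
    obtain ⟨i, k⟩ := v
    simp only [hwdef, Pi.zero_apply]
    rw [show ((i, k).2 + 1).val = ((k + 1 : Fin (m + 2))).val from rfl]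
    rw [show ((i, k).2 - 1).val = ((k - 1 : Fin (m + 2))).val from rfl]
    rw [parity k, paritym k]
    ring
  have hxform : ∀ x : Fin 3 × Fin (m + 2) → ℝ,
      adjMat ((SimpleGraph.cycleGraph 3) □ (SimpleGraph.cycleGraph (m + 2))) *ᵥ x = 0 →
      ∀ (i : Fin 3) (k : Fin (m + 2)),
        x (i + 1, k) + x (i + 2, k) + x (i, k + 1) + x (i, k - 1) = 0 := by
    intro x hxk i k
    have := congrFun hxk (i, k)
    rw [mv m hm] at this
    simpa using this
  constructor
  · have hker : LinearMap.ker
        (adjMat ((SimpleGraph.cycleGraph 3) □ (SimpleGraph.cycleGraph (m + 2)))).mulVecLin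
        = Submodule.span ℝ {w} := by
      apply le_antisymm
      · intro x hxk
        rw [LinearMap.mem_ker, Matrix.mulVecLin_apply] at hxk
        have hch := charKer m hm hl h3 x (hxform x hxk)
        rw [Submodule.mem_span_singleton]
        refine ⟨x (0, 0), ?_⟩
        funext p
        obtain ⟨i, k⟩ := p
        rw [hch i k]
        simp only [hwdef, Pi.smul_apply, smul_eq_mul]
        ring
      · rw [Submodule.span_singleton_le_iff_mem]
        rw [LinearMap.mem_ker, Matrix.mulVecLin_apply]
        exact hwker
    rw [hker]
    have hwne : w ≠ 0 := by
      intro h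
      have := congrFun h (0, 0)
      simp [hwdef] at this
    exact finrank_span_singleton hwne
  · intro x hxk hxne v
    have hch := charKer m hm hl h3 x (hxform x hxk)
    have hc0 : x (0, 0) ≠ 0 := by
      intro h0
      apply hxne
      funext p
      obtain ⟨i, k⟩ := p
      rw [hch i k, h0, mul_zero]
      rfl
    obtain ⟨i, k⟩ := v
    rw [hch i k]
    exact mul_ne_zero (pow_ne_zero _ (by norm_num)) hc0

end NutPaper
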